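/- Let 0 < ε < 1 and let (x_n) be a sequence of positive reals with lim_{n→∞} n·x_n = 1 − ε. Then for the complete graphs K_n, lim_{n→∞} L(x_n, K_n) = (1−ε)/ε and lim_{n→∞} I(x_n, K_n) = 1. -/

import Mathlib

open Filter Topology

/-- A self-avoiding walk from `o` in the graph `G`, encoded as the (nonempty) list of
visited vertices: it starts at `o`, consecutive vertices are adjacent, and no vertex is
visited more than once.  A list of length `k+1` corresponds to a walk with `k` edges. -/
def IsSAWFrom {V : Type*} (G : SimpleGraph V) (o : V) (l : List V) : Prop :=
  l.head? = some o ∧ l.Chain' G.Adj ∧ l.Nodup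

/-- `sawCount G o k = |SAW_k(o,G)|`, the number of self-avoiding walks from `o` with
exactly `k` edges. -/
noncomputable def sawCount {V : Type*} (G : SimpleGraph V) (o : V) (k : ℕ) : ℕ :=
  Nat.card {l : List V // IsSAWFrom G o l ∧ l.length = k + 1}

/-- The partition function `Z_{o,G}(x) = Σ_k |SAW_k(o,G)| x^k`.  Since a self-avoiding
walk in a graph on `|V|` vertices has at most `|V| - 1` edges, the sum over
`k < |V|` captures all nonzero terms. -/
noncomputable def sawZ {V : Type*} [Fintype V] (G : SimpleGraph V) (o : V) (x : ℝ) : ℝ :=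
  ∑ k ∈ Finset.range (Fintype.card V), (sawCount G o k : ℝ) * x ^ k

/-- The expected length `L(x,o,G) = Z_{o,G}(x)⁻¹ Σ_k k |SAW_k(o,G)| x^k`. -/
noncomputable def sawL {V : Type*} [Fintype V] (G : SimpleGraph V) (o : V) (x : ℝ) : ℝ :=
  (sawZ G o x)⁻¹ *
    ∑ k ∈ Finset.range (Fintype.card V), (k : ℝ) * (sawCount G o k : ℝ) * x ^ k

/-- The number of pairs `(ω, ω')` of self-avoiding walks from `o`, with `k` resp. `j`
edges, whose vertex sets intersect exactly in `{o}`. -/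
noncomputable def sawPairCount {V : Type*} (G : SimpleGraph V) (o : V) (k j : ℕ) : ℕ :=
  Nat.card {p : List V × List V //
    (IsSAWFrom G o p.1 ∧ p.1.length = k + 1) ∧
    (IsSAWFrom G o p.2 ∧ p.2.length = j + 1) ∧
    {v | v ∈ p.1 ∧ v ∈ p.2} = {o}}

/-- The trivial-intersection probability
`I(x,o,G) = Z_{o,G}(x)⁻² Σ x^{|ω|+|ω'|}`, summed over pairs of self-avoiding walks
from `o` whose vertex sets meet only in `o`. -/
noncomputable def sawI {V : Type*} [Fintype V] (G : SimpleGraph V) (o : V) (x : ℝ) : ℝ :=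
  ((sawZ G o x) ^ 2)⁻¹ *
    ∑ k ∈ Finset.range (Fintype.card V), ∑ j ∈ Finset.range (Fintype.card V),
      (sawPairCount G o k j : ℝ) * x ^ (k + j)

/-- The finite-graph critical exponent `γ(x,o,G) = log Z_{o,G}(x) / log (L(x,o,G) + 1)`. -/
noncomputable def sawGamma {V : Type*} [Fintype V] (G : SimpleGraph V) (o : V) (x : ℝ) : ℝ :=
  Real.log (sawZ G o x) / Real.log (sawL G o x + 1)

/-- A graph is vertex-transitive if its automorphism group acts transitively on vertices. -/
def SimpleGraph.VertexTransitive {V : Type*} (G : SimpleGraph V) : Prop :=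
  ∀ u v : V, ∃ φ : G ≃g G, φ u = v

/-- A graph is `d`-regular: every vertex has exactly `d` neighbours. -/
def SawRegular {V : Type*} (G : SimpleGraph V) (d : ℕ) : Prop :=
  ∀ v : V, Nat.card (G.neighborSet v) = d

/-- `(x n)` is super-critical for the rooted family `(G n, o n)`:
`liminf_n Z_{o_n, G_n}(x_n) = ∞`, i.e. `Z` tends to infinity. -/
def SawSuperCritical {V : ℕ → Type*} [∀ n, Fintype (V n)]
    (G : ∀ n, SimpleGraph (V n)) (o : ∀ n, V n) (x : ℕ → ℝ) : Prop :=
  Tendsto (fun n => sawZ (G n) (o n) (x n)) atTop atTop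

/-- `(x n)` is sub-critical for the rooted family `(G n, o n)`:
`limsup_n Z_{o_n, G_n}(x_n) < ∞`, i.e. the sequence of partition functions is bounded. -/
def SawSubCritical {V : ℕ → Type*} [∀ n, Fintype (V n)]
    (G : ∀ n, SimpleGraph (V n)) (o : ∀ n, V n) (x : ℕ → ℝ) : Prop :=
  BddAbove (Set.range fun n => sawZ (G n) (o n) (x n))

/-- `(x n)` is critical: for every `0 < ε < 1`, `(x n (1+ε))` is super-critical and
`(x n (1-ε))` is sub-critical. -/
def SawCritical {V : ℕ → Type*} [∀ n, Fintype (V n)]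
    (G : ∀ n, SimpleGraph (V n)) (o : ∀ n, V n) (x : ℕ → ℝ) : Prop :=
  ∀ ε : ℝ, 0 < ε → ε < 1 →
    SawSuperCritical G o (fun n => x n * (1 + ε)) ∧
    SawSubCritical G o (fun n => x n * (1 - ε))

/-- `Z_{K_n}(x)` for the complete graph `K_n` on `n` vertices, rooted at an arbitrary
vertex (all choices agree by symmetry); junk value `0` for `n = 0`. -/
noncomputable def completeZ (n : ℕ) (x : ℝ) : ℝ :=
  if h : 0 < n then sawZ (⊤ : SimpleGraph (Fin n)) ⟨0, h⟩ x else 0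

/-- `L(x, K_n)` for the complete graph `K_n`; junk value `0` for `n = 0`. -/
noncomputable def completeL (n : ℕ) (x : ℝ) : ℝ :=
  if h : 0 < n then sawL (⊤ : SimpleGraph (Fin n)) ⟨0, h⟩ x else 0

/-- `I(x, K_n)` for the complete graph `K_n`; junk value `0` for `n = 0`. -/
noncomputable def completeI (n : ℕ) (x : ℝ) : ℝ :=
  if h : 0 < n then sawI (⊤ : SimpleGraph (Fin n)) ⟨0, h⟩ x else 0

/-- `γ(x, K_n)` for the complete graph `K_n`; junk value `0` for `n = 0`. -/
noncomputable def completeGamma (n : ℕ) (x : ℝ) : ℝ :=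
  if h : 0 < n then sawGamma (⊤ : SimpleGraph (Fin n)) ⟨0, h⟩ x else 0

/-- A non-backtracking walk in `G`, encoded as the list of visited vertices:
consecutive vertices are adjacent and `ω_{j+2} ≠ ω_j` for all `j`. -/
def IsNBWalk {V : Type*} (G : SimpleGraph V) (l : List V) : Prop :=
  l.Chain' G.Adj ∧ ∀ i, i + 2 < l.length → l[i]? ≠ l[i + 2]?

/-- The number of non-backtracking walks of length `t` from `u` to `v`. -/
noncomputable def nbCount {V : Type*} (G : SimpleGraph V) (u v : V) (t : ℕ) : ℕ :=
  Nat.card {l : List V //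
    IsNBWalk G l ∧ l.length = t + 1 ∧ l.head? = some u ∧ l.getLast? = some v}

/-- `p_t(u,v)`: the number of non-backtracking walks of length `t` from `u` to `v`
divided by `d(d-1)^{t-1}`, i.e. the probability that the non-backtracking random walk
on a `d`-regular graph started at `u` is at `v` at time `t`. -/
noncomputable def nbProb {V : Type*} (G : SimpleGraph V) (d : ℕ) (u v : V) (t : ℕ) : ℝ :=
  (nbCount G u v t : ℝ) / (d * ((d : ℝ) - 1) ^ (t - 1))

/-- The mixing time of the non-backtracking random walk on the `d`-regular graph `G`
with `N` vertices: the least `t ≥ 1` with `|p_t(u,v) - 1/N| ≤ 1/(2N)` for all `u, v`. -/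
noncomputable def nbMixingTime {V : Type*} [Fintype V] (G : SimpleGraph V) (d : ℕ) : ℕ :=
  sInf {t : ℕ | 1 ≤ t ∧ ∀ u v : V,
    |nbProb G d u v t - 1 / (Fintype.card V : ℝ)| ≤ 1 / (2 * (Fintype.card V : ℝ))}

-- Auxiliary counting and analysis lemmas --

lemma saw_cons_tail {α : Type*} {l : List α} {o : α} (h : l.head? = some o) :
    l = o :: l.tail := by
  cases l with
  | nil => simp at h
  | cons a t => simp_all

lemma saw_chain'_of_nodup {α : Type*} {l : List α} (h : l.Nodup) :
    l.Chain' (⊤ : SimpleGraph α).Adj := by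
  have := (List.Pairwise.isChain h)
  exact this.imp (fun a b hab => by simpa using hab)

/-- nodup lists of length k ≃ embeddings. -/
def nodupListEquivEmb (α : Type*) (k : ℕ) :
    {l : List α // l.Nodup ∧ l.length = k} ≃ (Fin k ↪ α) where
  toFun l := ⟨fun i => l.1.get (Fin.cast l.2.2.symm i), by
    have : Function.Injective l.1.get := List.nodup_iff_injective_get.mp l.2.1
    exact this.comp (Fin.cast_injective _)⟩
  invFun f := ⟨List.ofFn f, List.nodup_ofFn.mpr f.injective, List.length_ofFn⟩
  left_inv l := by
    apply Subtype.ext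
    refine List.ext_get (by simp [l.2.2]) fun i h1 h2 => ?_
    simp [List.get_ofFn]
  right_inv f := by
    ext i
    simp [List.get_ofFn]

lemma card_nodupList (α : Type*) [Fintype α] [DecidableEq α] (k : ℕ) :
    Nat.card {l : List α // l.Nodup ∧ l.length = k}
      = (Fintype.card α).descFactorial k := by
  rw [Nat.card_congr (nodupListEquivEmb α k), Nat.card_eq_fintype_card,
    Fintype.card_embedding_eq, Fintype.card_fin]

/-- SAWs in the complete graph ≃ nodup lists over the other vertices. -/
def sawTopEquiv {α : Type*} (o : α) (k : ℕ) :
    {l : List α // IsSAWFrom (⊤ : SimpleGraph α) o l ∧ l.length = k + 1} ≃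
    {t : List {v : α // v ≠ o} // t.Nodup ∧ t.length = k} where
  toFun l := by
    refine ⟨l.1.tail.attach.map (fun x => ⟨x.1, ?_⟩), ?_, ?_⟩
    · intro hxo
      have hnd := l.2.1.2.2
      rw [saw_cons_tail l.2.1.1] at hnd
      have hx2 := x.2
      rw [hxo] at hx2
      exact (List.nodup_cons.mp hnd).1 hx2
    · refine List.Nodup.map ?_ (List.nodup_attach.mpr ?_)
      · intro a b hab
        exact Subtype.ext (by simpa using hab)
      · have hnd := l.2.1.2.2
        rw [saw_cons_tail l.2.1.1] at hnd
        exact (List.nodup_cons.mp hnd).2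
    · have := l.2.2
      rw [saw_cons_tail l.2.1.1] at this
      simpa using Nat.succ_injective (by simpa using this)
  invFun t := by
    refine ⟨o :: t.1.map Subtype.val, ⟨rfl, ?_, ?_⟩, by simp [t.2.2]⟩
    · apply saw_chain'_of_nodup
      rw [List.nodup_cons]
      constructor
      · intro h
        obtain ⟨v, hv, hvo⟩ := List.mem_map.mp h
        exact v.2 hvo
      · exact List.Nodup.map Subtype.val_injective t.2.1
    · rw [List.nodup_cons]
      constructor
      · intro h
        obtain ⟨v, hv, hvo⟩ := List.mem_map.mp h
        exact v.2 hvo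
      · exact List.Nodup.map Subtype.val_injective t.2.1
  left_inv l := by
    apply Subtype.ext
    dsimp only
    rw [List.map_map]
    have key : ∀ (g : {x // x ∈ l.1.tail} → {v : α // v ≠ o}), (∀ x, (g x).1 = x.1) →
        List.map (Subtype.val ∘ g) l.1.tail.attach = l.1.tail := by
      intro g hg
      rw [show Subtype.val ∘ g = Subtype.val from funext fun x => hg x]
      exact List.attach_map_subtype_val _
    rw [key _ (fun x => rfl)]
    exact (saw_cons_tail l.2.1.1).symm
  right_inv t := by
    apply Subtype.ext
    apply List.map_injective_iff.mpr Subtype.val_injective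
    dsimp only
    simp [List.map_map, Function.comp]

lemma sawCount_top {α : Type*} [Fintype α] [DecidableEq α] (o : α) (k : ℕ) :
    sawCount (⊤ : SimpleGraph α) o k = (Fintype.card α - 1).descFactorial k := by
  rw [sawCount, Nat.card_congr (sawTopEquiv o k), card_nodupList]
  congr 1
  simp

lemma saw_top_facts {α : Type*} {o : α} {l : List α} {k : ℕ}
    (h : IsSAWFrom (⊤ : SimpleGraph α) o l ∧ l.length = k + 1) :
    l = o :: l.tail ∧ o ∉ l.tail ∧ l.tail.Nodup ∧ l.tail.length = k := by
  obtain ⟨⟨hh, _, hnd⟩, hl⟩ := h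
  have hcons := saw_cons_tail hh
  rw [hcons] at hnd
  refine ⟨hcons, (List.nodup_cons.mp hnd).1, (List.nodup_cons.mp hnd).2, ?_⟩
  have h2 := hl
  rw [hcons] at h2
  simpa using h2

lemma saw_top_of {α : Type*} {o : α} {t : List α} {k : ℕ}
    (ho : o ∉ t) (hnd : t.Nodup) (hl : t.length = k) :
    IsSAWFrom (⊤ : SimpleGraph α) o (o :: t) ∧ (o :: t).length = k + 1 := by
  have hnd' : (o :: t).Nodup := List.nodup_cons.mpr ⟨ho, hnd⟩
  exact ⟨⟨rfl, saw_chain'_of_nodup hnd', hnd'⟩, by simp [hl]⟩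

def sawPairEquiv {α : Type*} (o : α) (k j : ℕ) :
    {p : List α × List α //
      (IsSAWFrom (⊤ : SimpleGraph α) o p.1 ∧ p.1.length = k + 1) ∧
      (IsSAWFrom (⊤ : SimpleGraph α) o p.2 ∧ p.2.length = j + 1) ∧
      {v | v ∈ p.1 ∧ v ∈ p.2} = {o}} ≃
    {l : List α // IsSAWFrom (⊤ : SimpleGraph α) o l ∧ l.length = (k + j) + 1} where
  toFun p := by
    refine ⟨o :: (p.1.1.tail ++ p.1.2.tail), ?_⟩
    obtain ⟨h1, h2, hint⟩ := p.2
    obtain ⟨hc1, ho1, hnd1, hl1⟩ := saw_top_facts h1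
    obtain ⟨hc2, ho2, hnd2, hl2⟩ := saw_top_facts h2
    refine saw_top_of ?_ ?_ (by simp [hl1, hl2])
    · intro h
      rcases List.mem_append.mp h with h | h
      exacts [ho1 h, ho2 h]
    · rw [List.nodup_append']
      refine ⟨hnd1, hnd2, fun v hv1 hv2 => ?_⟩
      have : v ∈ ({o} : Set α) := by
        rw [← hint]
        refine ⟨?_, ?_⟩
        · rw [hc1]; exact List.mem_cons_of_mem _ hv1
        · rw [hc2]; exact List.mem_cons_of_mem _ hv2
      exact ho1 (by rwa [Set.mem_singleton_iff.mp this] at hv1)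
  invFun l := by
    refine ⟨(o :: l.1.tail.take k, o :: l.1.tail.drop k), ?_, ?_, ?_⟩
    · obtain ⟨hc, ho, hnd, hl⟩ := saw_top_facts l.2
      exact saw_top_of (fun h => ho ((List.take_sublist _ _).mem h))
        (hnd.sublist (List.take_sublist _ _)) (by simp [hl])
    · obtain ⟨hc, ho, hnd, hl⟩ := saw_top_facts l.2
      exact saw_top_of (fun h => ho ((List.drop_sublist _ _).mem h))
        (hnd.sublist (List.drop_sublist _ _)) (by rw [List.length_drop, hl]; omega)
    · obtain ⟨hc, ho, hnd, hl⟩ := saw_top_facts l.2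
      ext v
      simp only [Set.mem_setOf_eq, Set.mem_singleton_iff, List.mem_cons]
      constructor
      · rintro ⟨hv1 | hv1, hv2 | hv2⟩
        · exact hv1
        · exact hv1
        · exact hv2
        · exfalso
          have hnd' : (l.1.tail.take k ++ l.1.tail.drop k).Nodup := by
            rw [List.take_append_drop]; exact hnd
          exact (List.nodup_append'.mp hnd').2.2 hv1 hv2
      · rintro rfl
        exact ⟨Or.inl rfl, Or.inl rfl⟩
  left_inv p := by
    apply Subtype.ext
    obtain ⟨h1, h2, hint⟩ := p.2
    obtain ⟨hc1, ho1, hnd1, hl1⟩ := saw_top_facts h1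
    obtain ⟨hc2, ho2, hnd2, hl2⟩ := saw_top_facts h2
    dsimp only
    rw [List.tail_cons, List.take_left' hl1, List.drop_left' hl1]
    exact Prod.ext (hc1.symm) (hc2.symm)
  right_inv l := by
    apply Subtype.ext
    obtain ⟨hc, ho, hnd, hl⟩ := saw_top_facts l.2
    dsimp only
    rw [List.tail_cons, List.tail_cons, List.take_append_drop]
    exact hc.symm

lemma sawPairCount_top {α : Type*} [Fintype α] [DecidableEq α] (o : α) (k j : ℕ) :
    sawPairCount (⊤ : SimpleGraph α) o k j
      = (Fintype.card α - 1).descFactorial (k + j) := by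
  rw [sawPairCount, Nat.card_congr (sawPairEquiv o k j), ← sawCount_top o (k + j), sawCount]

-- Finite sums as tsums, for the complete graph.
lemma completeZ_eq_tsum (n : ℕ) (hn : 0 < n) (y : ℝ) :
    completeZ n y = ∑' k : ℕ, ((n - 1).descFactorial k : ℝ) * y ^ k := by
  rw [completeZ, dif_pos hn, sawZ]
  rw [tsum_eq_sum (s := Finset.range (Fintype.card (Fin n)))]
  · refine Finset.sum_congr rfl fun k _ => ?_
    rw [sawCount_top]
    simp
  · intro k hk
    have hlt : n - 1 < k := by
      simp only [Finset.mem_range, Fintype.card_fin, not_lt] at hk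
      omega
    rw [Nat.descFactorial_eq_zero_iff_lt.mpr hlt]
    simp

lemma completeL_eq_tsum (n : ℕ) (hn : 0 < n) (y : ℝ) :
    completeL n y = (completeZ n y)⁻¹ *
      ∑' k : ℕ, (k : ℝ) * (((n - 1).descFactorial k : ℝ) * y ^ k) := by
  rw [completeL, dif_pos hn, sawL, completeZ, dif_pos hn]
  congr 1
  rw [tsum_eq_sum (s := Finset.range (Fintype.card (Fin n)))]
  · refine Finset.sum_congr rfl fun k _ => ?_
    rw [sawCount_top]
    simp [mul_assoc]
  · intro k hk
    have hlt : n - 1 < k := by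
      simp only [Finset.mem_range, Fintype.card_fin, not_lt] at hk
      omega
    rw [Nat.descFactorial_eq_zero_iff_lt.mpr hlt]
    simp

lemma completeI_eq_tsum (n : ℕ) (hn : 0 < n) (y : ℝ) :
    completeI n y = ((completeZ n y) ^ 2)⁻¹ *
      ∑' p : ℕ × ℕ, ((n - 1).descFactorial (p.1 + p.2) : ℝ) * y ^ (p.1 + p.2) := by
  rw [completeI, dif_pos hn, sawI, completeZ, dif_pos hn]
  congr 1
  rw [tsum_eq_sum
      (s := Finset.range (Fintype.card (Fin n)) ×ˢ Finset.range (Fintype.card (Fin n)))]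
  · rw [Finset.sum_product]
    refine Finset.sum_congr rfl fun k _ => Finset.sum_congr rfl fun j _ => ?_
    rw [sawPairCount_top]
    simp
  · intro p hp
    have hlt : n - 1 < p.1 + p.2 := by
      simp only [Finset.mem_product, Finset.mem_range, Fintype.card_fin, not_and_or,
        not_lt] at hp
      omega
    rw [Nat.descFactorial_eq_zero_iff_lt.mpr hlt]
    simp

/-- If `0 < ε < 1` and `n · x_n → 1 − ε`, then for the complete graphs
`K_n`, `L(x_n, K_n) → (1−ε)/ε` and `I(x_n, K_n) → 1`. -/
theorem complete_subCritical_length_and_intersection (ε : ℝ) (hε0 : 0 < ε) (hε1 : ε < 1)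
    (x : ℕ → ℝ) (hx : ∀ n, 0 < x n)
    (hlim : Tendsto (fun n : ℕ => (n : ℝ) * x n) atTop (𝓝 (1 - ε))) :
    Tendsto (fun n : ℕ => completeL n (x n)) atTop (𝓝 ((1 - ε) / ε)) ∧
    Tendsto (fun n : ℕ => completeI n (x n)) atTop (𝓝 1) := by
  have hε01 : (0:ℝ) ≤ 1 - ε := by linarith
  have hε1' : 1 - ε < 1 := by linarith
  have hεne : ε ≠ 0 := ne_of_gt hε0
  set c : ℝ := 1 - ε / 2 with hcdef
  have hc0 : 0 < c := by rw [hcdef]; linarith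
  have hc1 : c < 1 := by rw [hcdef]; linarith
  have hcε : 1 - ε < c := by rw [hcdef]; linarith
  -- x n → 0
  have hx0 : Tendsto x atTop (𝓝 0) := by
    have h1 : Tendsto (fun n : ℕ => ((n : ℝ) * x n) * ((n : ℝ))⁻¹) atTop
        (𝓝 ((1 - ε) * 0)) :=
      hlim.mul (tendsto_inv_atTop_zero.comp tendsto_natCast_atTop_atTop)
    rw [mul_zero] at h1
    refine Tendsto.congr' ?_ h1
    filter_upwards [eventually_ge_atTop 1] with n hn
    have hne : (n : ℝ) ≠ 0 := by positivity
    field_simp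
  set F : ℕ → ℕ → ℝ := fun n k => ((n - 1).descFactorial k : ℝ) * x n ^ k with hF
  -- pointwise convergence of the terms
  have hpoint : ∀ k, Tendsto (fun n => F n k) atTop (𝓝 ((1 - ε) ^ k)) := by
    intro k
    have hfac : ∀ i : ℕ, Tendsto (fun n : ℕ => ((n : ℝ) - 1 - i) * x n) atTop
        (𝓝 (1 - ε)) := by
      intro i
      have h1 : Tendsto (fun n : ℕ => (n : ℝ) * x n - (1 + (i : ℝ)) * x n) atTop
          (𝓝 ((1 - ε) - (1 + (i : ℝ)) * 0)) := hlim.sub (tendsto_const_nhds.mul hx0)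
      simp only [mul_zero, sub_zero] at h1
      refine h1.congr fun n => by ring
    have h2 : Tendsto (fun n : ℕ => ∏ i ∈ Finset.range k, (((n : ℝ) - 1 - i) * x n)) atTop
        (𝓝 (∏ _i ∈ Finset.range k, (1 - ε))) :=
      tendsto_finset_prod _ (fun i _ => hfac i)
    rw [Finset.prod_const, Finset.card_range] at h2
    refine Tendsto.congr' ?_ h2
    filter_upwards [eventually_ge_atTop (k + 1)] with n hn
    have hcast : ((n - 1).descFactorial k : ℝ) = ∏ i ∈ Finset.range k, ((n : ℝ) - 1 - i) := by
      rw [Nat.descFactorial_eq_prod_range, Nat.cast_prod]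
      refine Finset.prod_congr rfl fun i hi => ?_
      have hik : i < k := Finset.mem_range.mp hi
      have hin : i ≤ n - 1 := by omega
      rw [Nat.cast_sub hin, Nat.cast_sub (by omega : 1 ≤ n)]
      norm_num
    rw [Finset.prod_mul_distrib, Finset.prod_const, Finset.card_range]
    simp only [hF]
    rw [hcast]
  -- uniform geometric bound
  have hbound : ∀ᶠ n in atTop, ∀ k, ‖F n k‖ ≤ c ^ k := by
    filter_upwards [hlim.eventually_le_const hcε] with n hn
    intro k
    have hx' : (0:ℝ) ≤ x n := (hx n).le
    have h0 : 0 ≤ F n k := by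
      simp only [hF]
      positivity
    rw [Real.norm_eq_abs, abs_of_nonneg h0]
    have hnx0 : (0:ℝ) ≤ (n : ℝ) * x n := mul_nonneg (Nat.cast_nonneg n) hx'
    calc F n k ≤ ((n : ℝ)) ^ k * x n ^ k := by
          simp only [hF]
          refine mul_le_mul_of_nonneg_right ?_ (by positivity)
          calc ((n - 1).descFactorial k : ℝ) ≤ (((n - 1 : ℕ)) : ℝ) ^ k := by
                exact_mod_cast Nat.descFactorial_le_pow _ _
            _ ≤ (n : ℝ) ^ k := by
                refine pow_le_pow_left₀ (by positivity) ?_ k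
                exact_mod_cast Nat.sub_le n 1
      _ = ((n : ℝ) * x n) ^ k := (mul_pow _ _ _).symm
      _ ≤ c ^ k := pow_le_pow_left₀ hnx0 hn k
  have hsumc : Summable (fun k : ℕ => c ^ k) := summable_geometric_of_lt_one hc0.le hc1
  -- convergence of Z
  have hZt : Tendsto (fun n => ∑' k, F n k) atTop (𝓝 (∑' k : ℕ, (1 - ε) ^ k)) :=
    tendsto_tsum_of_dominated_convergence hsumc hpoint hbound
  have htsumZ : ∑' k : ℕ, (1 - ε) ^ k = ε⁻¹ := by
    rw [tsum_geometric_of_lt_one hε01 hε1']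
    norm_num
  have hZ : Tendsto (fun n => completeZ n (x n)) atTop (𝓝 ε⁻¹) := by
    rw [htsumZ] at hZt
    refine Tendsto.congr' ?_ hZt
    filter_upwards [eventually_ge_atTop 1] with n hn
    exact (completeZ_eq_tsum n hn (x n)).symm
  have hZne : (ε⁻¹ : ℝ) ≠ 0 := by positivity
  -- convergence of the length numerator
  have hsumc' : Summable (fun k : ℕ => (k : ℝ) * c ^ k) := by
    have := summable_pow_mul_geometric_of_norm_lt_one 1
      (r := c) (by rw [Real.norm_eq_abs, abs_of_nonneg hc0.le]; exact hc1)
    simpa using this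
  have hNum : Tendsto (fun n => ∑' k : ℕ, (k : ℝ) * F n k) atTop
      (𝓝 (∑' k : ℕ, (k : ℝ) * (1 - ε) ^ k)) := by
    refine tendsto_tsum_of_dominated_convergence hsumc'
      (fun k => tendsto_const_nhds.mul (hpoint k)) ?_
    filter_upwards [hbound] with n hn
    intro k
    rw [norm_mul, Real.norm_natCast]
    exact mul_le_mul_of_nonneg_left (hn k) (Nat.cast_nonneg k)
  have htsumNum : ∑' k : ℕ, (k : ℝ) * (1 - ε) ^ k = (1 - ε) / ε ^ 2 := by
    rw [tsum_coe_mul_geometric_of_norm_lt_one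
      (by rw [Real.norm_eq_abs, abs_of_nonneg hε01]; exact hε1')]
    norm_num
  -- convergence of the intersection numerator
  have hsumc2 : Summable (fun p : ℕ × ℕ => c ^ (p.1 + p.2)) := by
    have hs : Summable (fun k : ℕ => ‖c ^ k‖) := by
      simpa [Real.norm_eq_abs, abs_of_nonneg (pow_nonneg hc0.le _)] using hsumc
    have := summable_mul_of_summable_norm (f := fun k : ℕ => c ^ k)
      (g := fun k : ℕ => c ^ k) hs hs
    refine this.congr fun p => ?_
    rw [pow_add]
  have hINum : Tendsto (fun n => ∑' p : ℕ × ℕ, F n (p.1 + p.2)) atTop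
      (𝓝 (∑' p : ℕ × ℕ, (1 - ε) ^ (p.1 + p.2))) := by
    refine tendsto_tsum_of_dominated_convergence hsumc2
      (fun p => hpoint (p.1 + p.2)) ?_
    filter_upwards [hbound] with n hn
    exact fun p => hn (p.1 + p.2)
  have htsumINum : ∑' p : ℕ × ℕ, (1 - ε) ^ (p.1 + p.2) = ε⁻¹ * ε⁻¹ := by
    have hs : Summable (fun k : ℕ => ‖(1 - ε) ^ k‖) := by
      simpa [Real.norm_eq_abs, abs_of_nonneg (pow_nonneg hε01 _)] using
        summable_geometric_of_lt_one hε01 hε1'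
    calc ∑' p : ℕ × ℕ, (1 - ε) ^ (p.1 + p.2)
        = ∑' p : ℕ × ℕ, (fun k : ℕ => (1 - ε) ^ k) p.1 * (fun k : ℕ => (1 - ε) ^ k) p.2 :=
          tsum_congr fun p => pow_add _ _ _
      _ = ε⁻¹ * ε⁻¹ := by
          rw [← tsum_mul_tsum_of_summable_norm hs hs, htsumZ]
  constructor
  · -- the length
    have h := (hZ.inv₀ hZne).mul hNum
    rw [htsumNum, inv_inv] at h
    have hval : ε * ((1 - ε) / ε ^ 2) = (1 - ε) / ε := by
      field_simp <;> ring
    rw [hval] at h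
    refine Tendsto.congr' ?_ h
    filter_upwards [eventually_ge_atTop 1] with n hn
    rw [completeL_eq_tsum n hn (x n)]
  · -- the intersection probability
    have h := ((hZ.pow 2).inv₀ (by positivity)).mul hINum
    rw [htsumINum] at h
    have hval : ((ε⁻¹ : ℝ) ^ 2)⁻¹ * (ε⁻¹ * ε⁻¹) = 1 := by
      field_simp <;> ring
    rw [hval] at h
    refine Tendsto.congr' ?_ h
    filter_upwards [eventually_ge_atTop 1] with n hn
    exact (completeI_eq_tsum n hn (x n)).symm
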